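/- arXiv:1403.2645 — 3 statements merged into one kernel-verified Lean document; each statement's English description precedes it below -/
import Mathlib

section
/- Let A, B : U → V and A', B' : U' → V' be surjective linear maps of finite-dimensional real (or complex) vector spaces, topologically equivalent via homeomorphisms φ : U → U' and ψ : V → V' (ψ∘A = A'∘φ, ψ∘B = B'∘φ). Then for every v ∈ V, ψ(v + A(ker B)) = ψ(v) + A'(ker B'), so ψ induces a well-defined homeomorphism V/A(ker B) → V'/A'(ker B'). -/
private lemma stmt5_aux {𝕜 : Type*} [RCLike 𝕜] {U V U' V' : Type*}
    [NormedAddCommGroup U] [NormedSpace 𝕜 U]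
    [NormedAddCommGroup V] [NormedSpace 𝕜 V]
    [NormedAddCommGroup U'] [NormedSpace 𝕜 U']
    [NormedAddCommGroup V'] [NormedSpace 𝕜 V']
    (A B : U →ₗ[𝕜] V) (A' B' : U' →ₗ[𝕜] V')
    (hA : Function.Surjective A)
    (φ : U ≃ₜ U') (ψ : V ≃ₜ V')
    (hcA : ∀ u : U, ψ (A u) = A' (φ u)) (hcB : ∀ u : U, ψ (B u) = B' (φ u))
    (v x : V) (hx : x ∈ Submodule.map A (LinearMap.ker B)) :
    ψ (v + x) - ψ v ∈ Submodule.map A' (LinearMap.ker B') := by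
  obtain ⟨u, hu⟩ := hA v
  obtain ⟨k, hk, rfl⟩ := hx
  refine ⟨φ (u + k) - φ u, ?_, ?_⟩
  · have hBk : B k = 0 := hk
    have h1 := hcB (u + k)
    have h2 := hcB u
    have hBuk : B (u + k) = B u := by rw [map_add, hBk, add_zero]
    rw [SetLike.mem_coe, LinearMap.mem_ker, map_sub, ← h1, ← h2, hBuk, sub_self]
  · rw [map_sub, ← hcA, ← hcA, map_add, hu]

/-- Second part of Lemma 5: ψ maps each coset v + A(ker B) onto ψ(v) + A'(ker B'),
hence induces a well-defined homeomorphism V/A(ker B) → V'/A'(ker B'). -/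
theorem stmt5 (𝕜 : Type*) [RCLike 𝕜] (U V U' V' : Type*)
    [NormedAddCommGroup U] [NormedSpace 𝕜 U] [FiniteDimensional 𝕜 U]
    [NormedAddCommGroup V] [NormedSpace 𝕜 V] [FiniteDimensional 𝕜 V]
    [NormedAddCommGroup U'] [NormedSpace 𝕜 U'] [FiniteDimensional 𝕜 U']
    [NormedAddCommGroup V'] [NormedSpace 𝕜 V'] [FiniteDimensional 𝕜 V']
    (A B : U →ₗ[𝕜] V) (A' B' : U' →ₗ[𝕜] V')
    (hA : Function.Surjective A) (hB : Function.Surjective B)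
    (hA' : Function.Surjective A') (hB' : Function.Surjective B')
    (φ : U ≃ₜ U') (ψ : V ≃ₜ V')
    (hcA : ∀ u : U, ψ (A u) = A' (φ u)) (hcB : ∀ u : U, ψ (B u) = B' (φ u)) :
    (∀ v : V, ψ '' ((fun w => v + w) '' (Submodule.map A (LinearMap.ker B) : Set V)) =
      (fun w => ψ v + w) '' (Submodule.map A' (LinearMap.ker B') : Set V')) ∧
    ∃ ψ₂ : (V ⧸ Submodule.map A (LinearMap.ker B)) ≃ₜ
        (V' ⧸ Submodule.map A' (LinearMap.ker B')),
      ∀ v : V, ψ₂ (Submodule.Quotient.mk v) = Submodule.Quotient.mk (ψ v) := by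
  set N := Submodule.map A (LinearMap.ker B) with hN
  set N' := Submodule.map A' (LinearMap.ker B') with hN'
  -- the reversed commuting conditions
  have hcA' : ∀ u' : U', ψ.symm (A' u') = A (φ.symm u') := by
    intro u'
    apply ψ.injective
    rw [ψ.apply_symm_apply, hcA, φ.apply_symm_apply]
  have hcB' : ∀ u' : U', ψ.symm (B' u') = B (φ.symm u') := by
    intro u'
    apply ψ.injective
    rw [ψ.apply_symm_apply, hcB, φ.apply_symm_apply]
  have fwd : ∀ v x, x ∈ N → ψ (v + x) - ψ v ∈ N' :=
    fun v x hx => stmt5_aux A B A' B' hA φ ψ hcA hcB v x hx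
  have bwd : ∀ v' x', x' ∈ N' → ψ.symm (v' + x') - ψ.symm v' ∈ N :=
    fun v' x' hx' => stmt5_aux A' B' A B hA' φ.symm ψ.symm hcA' hcB' v' x' hx'
  have part1 : ∀ v : V, ψ '' ((fun w => v + w) '' (N : Set V)) =
      (fun w => ψ v + w) '' (N' : Set V') := by
    intro v
    ext y
    constructor
    · rintro ⟨w, ⟨x, hx, rfl⟩, rfl⟩
      exact ⟨ψ (v + x) - ψ v, fwd v x hx, by simp⟩
    · rintro ⟨y', hy', rfl⟩
      refine ⟨v + (ψ.symm (ψ v + y') - v), ⟨ψ.symm (ψ v + y') - v, ?_, rfl⟩, ?_⟩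
      · have := bwd (ψ v) y' hy'
        rwa [ψ.symm_apply_apply] at this
      · rw [add_sub_cancel, ψ.apply_symm_apply]
  refine ⟨part1, ?_⟩
  -- well-definedness on quotients
  have hrel : ∀ a b : V, N.quotientRel a b → N'.quotientRel (ψ a) (ψ b) := by
    intro a b hab
    rw [Submodule.quotientRel_def] at hab ⊢
    have := fwd b (a - b) hab
    rwa [add_sub_cancel] at this
  have hrel' : ∀ a b : V', N'.quotientRel a b → N.quotientRel (ψ.symm a) (ψ.symm b) := by
    intro a b hab
    rw [Submodule.quotientRel_def] at hab ⊢
    have := bwd b (a - b) hab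
    rwa [add_sub_cancel] at this
  let e : (V ⧸ N) ≃ (V' ⧸ N') :=
    { toFun := Quotient.map' ψ hrel
      invFun := Quotient.map' ψ.symm hrel'
      left_inv := by
        intro x
        induction x using Quotient.inductionOn' with
        | h v => simp [Quotient.map'_mk'']
      right_inv := by
        intro x
        induction x using Quotient.inductionOn' with
        | h v => simp [Quotient.map'_mk''] }
  have hmk : ∀ v : V, e (Submodule.Quotient.mk v) = Submodule.Quotient.mk (ψ v) :=
    fun v => Quotient.map'_mk'' ψ hrel v
  have hmk' : ∀ v : V', e.symm (Submodule.Quotient.mk v) = Submodule.Quotient.mk (ψ.symm v) :=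
    fun v => Quotient.map'_mk'' ψ.symm hrel' v
  have hc : Continuous e := by
    rw [(Submodule.isOpenQuotientMap_mkQ N).isQuotientMap.continuous_iff]
    have : (e ∘ N.mkQ) = fun v => N'.mkQ (ψ v) := by
      funext v
      simpa using hmk v
    rw [this]
    exact (Submodule.isOpenQuotientMap_mkQ N').continuous.comp ψ.continuous
  have hc' : Continuous e.symm := by
    rw [(Submodule.isOpenQuotientMap_mkQ N').isQuotientMap.continuous_iff]
    have : (e.symm ∘ N'.mkQ) = fun v => N.mkQ (ψ.symm v) := by
      funext v
      simpa using hmk' v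
    rw [this]
    exact (Submodule.isOpenQuotientMap_mkQ N).continuous.comp ψ.symm.continuous
  exact ⟨⟨e, hc, hc'⟩, hmk⟩
end

section
/- Let (A,B) = (L_kᵀ, R_kᵀ) be the pair of k×(k−1) matrices (transposes of the Kronecker shift matrices), viewed as linear maps F^{k−1} → F^k with k ≥ 2. Then im B has dimension k−1, A⁻¹(im B) has dimension k−2, and the pair of restrictions A, B : A⁻¹(im B) → im B is linearly equivalent to (L_{k−1}ᵀ, R_{k−1}ᵀ). -/
/-- The (k−1)×k Kronecker shift matrix L_k: ones in positions (i,i). -/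
def Lmat (F : Type*) [Field F] (k : ℕ) : Matrix (Fin (k - 1)) (Fin k) F :=
  fun i j => if (j : ℕ) = (i : ℕ) then 1 else 0

/-- The (k−1)×k Kronecker shift matrix R_k: ones in positions (i,i+1). -/
def Rmat (F : Type*) [Field F] (k : ℕ) : Matrix (Fin (k - 1)) (Fin k) F :=
  fun i j => if (j : ℕ) = (i : ℕ) + 1 then 1 else 0

open Matrix

lemma hL_apply (F : Type*) [Field F] (n : ℕ) (w : Fin n → F) (j : Fin (n+1)) :
    ((Lmat F (n+1))ᵀ).mulVecLin w j = if h : (j:ℕ) < n then w ⟨j, h⟩ else 0 := by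
  simp only [mulVecLin_apply, mulVec, dotProduct, transpose_apply, Lmat]
  split_ifs with h
  · refine (Finset.sum_eq_single (⟨(j:ℕ), h⟩ : Fin n) ?_ ?_).trans (by simp)
    · intro b _ hb
      rw [if_neg, zero_mul]
      exact fun e => hb (Fin.ext e.symm)
    · simp
  · apply Finset.sum_eq_zero
    intro i _
    rw [if_neg, zero_mul]
    intro e
    exact h (e ▸ i.isLt)

lemma hR_apply (F : Type*) [Field F] (n : ℕ) (w : Fin n → F) (j : Fin (n+1)) :
    ((Rmat F (n+1))ᵀ).mulVecLin w j =
      if h : 1 ≤ (j:ℕ) then w ⟨(j:ℕ)-1, by have := j.isLt; omega⟩ else 0 := by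
  simp only [mulVecLin_apply, mulVec, dotProduct, transpose_apply, Rmat]
  split_ifs with h
  · refine (Finset.sum_eq_single (⟨(j:ℕ)-1, by have := j.isLt; omega⟩ : Fin n) ?_ ?_).trans
      (by simp [Nat.sub_add_cancel h])
    · intro b _ hb
      rw [if_neg, zero_mul]
      intro e
      exact hb (Fin.ext (show (b:ℕ) = (j:ℕ)-1 by omega))
    · simp
  · apply Finset.sum_eq_zero
    intro i _
    rw [if_neg, zero_mul]
    omega

/-- For the pair (A,B) = (L_kᵀ, R_kᵀ) : F^{k−1} → F^k with k ≥ 2: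
im B has dimension k−1, A⁻¹(im B) has dimension k−2, and the restricted pair
A, B : A⁻¹(im B) → im B is linearly equivalent to (L_{k−1}ᵀ, R_{k−1}ᵀ). -/
theorem stmt13 (F : Type*) [Field F] (k : ℕ) (hk : 2 ≤ k) :
    letI A : (Fin (k - 1) → F) →ₗ[F] (Fin k → F) := ((Lmat F k)ᵀ).mulVecLin
    letI B : (Fin (k - 1) → F) →ₗ[F] (Fin k → F) := ((Rmat F k)ᵀ).mulVecLin
    Module.finrank F (LinearMap.range B) = k - 1 ∧
    Module.finrank F (Submodule.comap A (LinearMap.range B)) = k - 2 ∧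
    ∃ (φ : ↥(Submodule.comap A (LinearMap.range B)) ≃ₗ[F] (Fin (k - 1 - 1) → F))
      (ψ : ↥(LinearMap.range B) ≃ₗ[F] (Fin (k - 1) → F)),
      ∀ u : ↥(Submodule.comap A (LinearMap.range B)),
        ψ (A.restrict (fun _ hx => hx) u) = ((Lmat F (k - 1))ᵀ).mulVecLin (φ u) ∧
        ψ (B.restrict (fun x _ => LinearMap.mem_range_self B x) u) =
          ((Rmat F (k - 1))ᵀ).mulVecLin (φ u) := by
  obtain ⟨m, rfl⟩ : ∃ m, k = m + 2 := ⟨k - 2, by omega⟩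
  set Al : (Fin (m+1) → F) →ₗ[F] (Fin (m+2) → F) := ((Lmat F (m+2))ᵀ).mulVecLin with hAl
  set Bl : (Fin (m+1) → F) →ₗ[F] (Fin (m+2) → F) := ((Rmat F (m+2))ᵀ).mulVecLin with hBl
  have hA : ∀ (x : Fin (m+1) → F) (j : Fin (m+2)),
      Al x j = if h : (j:ℕ) < m+1 then x ⟨j, h⟩ else 0 := fun x j => hL_apply F (m+1) x j
  have hB : ∀ (x : Fin (m+1) → F) (j : Fin (m+2)),
      Bl x j = if h : 1 ≤ (j:ℕ) then x ⟨(j:ℕ)-1, by have := j.isLt; omega⟩ else 0 :=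
    fun x j => hR_apply F (m+1) x j
  -- B injective
  have hBinj : Function.Injective Bl := by
    intro x y hxy
    funext i
    have h1 := congrFun hxy (Fin.succ i)
    rw [hB, hB] at h1
    simpa using h1
  -- membership characterization of C
  have hkey : ∀ u : Fin (m+1) → F, u 0 = 0 →
      Bl (((Lmat F (m+1))ᵀ).mulVecLin (fun i : Fin m => u i.succ)) = Al u := by
    intro u hu
    funext j
    rw [hA, hB]
    split_ifs with h1 h2 h2
    · rw [hL_apply]
      split_ifs with h3
      · show u (Fin.succ ⟨(j:ℕ)-1, h3⟩) = u _
        congr 1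
        ext
        show (j:ℕ)-1+1 = (j:ℕ)
        omega
      · exact absurd (show ((j:ℕ)-1 < m) by omega) h3
    · rw [hL_apply]
      rw [dif_neg (show ¬((j:ℕ)-1 < m) by omega)]
    · have : (j : ℕ) = 0 := by omega
      have : j = 0 := Fin.ext this
      subst this
      simpa using hu.symm
    · rfl
  have hCmem : ∀ u : Fin (m+1) → F,
      u ∈ Submodule.comap Al (LinearMap.range Bl) ↔ u 0 = 0 := by
    intro u
    constructor
    · rintro ⟨y, hy⟩
      have h0 := congrFun hy 0
      rw [hB, hA] at h0
      simpa using h0.symm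
    · intro hu
      exact ⟨_, hkey u hu⟩
  -- φ
  let fwd : ↥(Submodule.comap Al (LinearMap.range Bl)) →ₗ[F] (Fin m → F) :=
    (LinearMap.funLeft F F Fin.succ).comp (Submodule.comap Al (LinearMap.range Bl)).subtype
  let gmap : (Fin m → F) →ₗ[F] (Fin (m+1) → F) :=
    { toFun := fun w => Fin.cons 0 w
      map_add' := by
        intro a b; funext i
        refine Fin.cases ?_ ?_ i <;> simp
      map_smul' := by
        intro c a; funext i
        refine Fin.cases ?_ ?_ i <;> simp }
  let bwd : (Fin m → F) →ₗ[F] ↥(Submodule.comap Al (LinearMap.range Bl)) :=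
    LinearMap.codRestrict _ gmap (fun w => (hCmem _).2 (by simp [gmap]))
  have h1 : fwd.comp bwd = LinearMap.id := by
    apply LinearMap.ext
    intro w
    funext i
    simp [fwd, bwd, gmap]
  have h2 : bwd.comp fwd = LinearMap.id := by
    apply LinearMap.ext
    intro u
    apply Subtype.ext
    funext i
    refine Fin.cases ?_ ?_ i
    · simp [fwd, bwd, gmap]
      exact ((hCmem _).1 u.2).symm
    · intro i
      simp [fwd, bwd, gmap]
  let φ : ↥(Submodule.comap Al (LinearMap.range Bl)) ≃ₗ[F] (Fin m → F) :=
    LinearEquiv.ofLinear fwd bwd h1 h2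
  -- ψ
  let e : (Fin (m+1) → F) ≃ₗ[F] ↥(LinearMap.range Bl) := LinearEquiv.ofInjective Bl hBinj
  let ψ : ↥(LinearMap.range Bl) ≃ₗ[F] (Fin (m+1) → F) := e.symm
  have hψ : ∀ (z : ↥(LinearMap.range Bl)) (w : Fin (m+1) → F),
      (z : Fin (m+2) → F) = Bl w → ψ z = w := by
    intro z w hzw
    rw [LinearEquiv.symm_apply_eq]
    exact Subtype.ext (by rw [LinearEquiv.ofInjective_apply]; exact hzw)
  refine ⟨?_, ?_, φ, ψ, ?_⟩
  · rw [LinearMap.finrank_range_of_inj hBinj]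
    simp
  · exact φ.finrank_eq.trans (by simp)
  · intro u
    have hu0 := (hCmem u.val).1 u.2
    constructor
    · apply hψ
      rw [LinearMap.restrict_apply]
      exact (hkey _ hu0).symm
    · apply hψ
      rw [LinearMap.restrict_apply]
      show Bl u.val = Bl _
      congr 1
      funext j
      show (u.val : Fin (m+1) → F) j = ((Rmat F (m+1))ᵀ).mulVecLin (φ u) j
      rw [hR_apply]
      split_ifs with h
      · show (u.val : Fin (m+1) → F) j = u.val (Fin.succ ⟨(j:ℕ)-1, _⟩)
        exact congrArg u.val (Fin.ext (show (j:ℕ) = (j:ℕ)-1+1 by omega))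
      · have hj0 : (j:ℕ) = 0 := by omega
        rw [← hu0]
        exact congrArg u.val (Fin.ext (show (j:ℕ) = ((0 : Fin (m+1)):ℕ) by simpa using hj0))
end

section
/- Let A, B : U → V and A', B' : U' → V' be pairs of linear bijections of finite-dimensional vector spaces over a field F. Then (A,B) is linearly equivalent to (A',B') if and only if dim U = dim U' and A⁻¹B is similar to A'⁻¹B' (as linear operators). -/
/-- Two pairs of linear bijections (A,B) : U → V and (A',B') : U' → V' are linearly
equivalent iff dim U = dim U' and A⁻¹B is similar to A'⁻¹B'. -/
theorem stmt15 (F : Type*) [Field F] (U V U' V' : Type*)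
    [AddCommGroup U] [Module F U] [AddCommGroup V] [Module F V]
    [AddCommGroup U'] [Module F U'] [AddCommGroup V'] [Module F V']
    [FiniteDimensional F U] [FiniteDimensional F V]
    [FiniteDimensional F U'] [FiniteDimensional F V']
    (A B : U ≃ₗ[F] V) (A' B' : U' ≃ₗ[F] V') :
    (∃ (φ : U ≃ₗ[F] U') (ψ : V ≃ₗ[F] V'),
        (∀ u : U, ψ (A u) = A' (φ u)) ∧ (∀ u : U, ψ (B u) = B' (φ u))) ↔
    (Module.finrank F U = Module.finrank F U' ∧
      ∃ φ : U ≃ₗ[F] U', ∀ u : U, φ (A.symm (B u)) = A'.symm (B' (φ u))) := by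
  constructor
  · rintro ⟨φ, ψ, hA, hB⟩
    refine ⟨φ.finrank_eq, φ, fun u => ?_⟩
    have h : A' (φ (A.symm (B u))) = B' (φ u) := by
      rw [← hA (A.symm (B u)), A.apply_symm_apply, hB]
    have := congrArg A'.symm h
    simpa using this
  · rintro ⟨-, φ, h⟩
    refine ⟨φ, A.symm.trans (φ.trans A'), fun u => ?_, fun u => ?_⟩
    · simp
    · simp [h u]
end
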